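/- For all integers c ≥ 3, x ≥ 1 and w ≥ 0, if k(c, i) ≤ c^i for all i ≤ w, then k(cx, w) ≤ C(x+w−1, w) · c^w, where C denotes the binomial coefficient. -/

import Mathlib

open Finset

instance finiteMP (s t : ℕ) :
    Finite {f : Fin s → Σ n : ℕ, Nat.Partition n // ∑ i, (f i).1 = t} := by
  have key : ∀ (f : {f : Fin s → Σ n : ℕ, Nat.Partition n // ∑ i, (f i).1 = t}) (i : Fin s),
      (f.1 i).1 < t + 1 :=
    fun f i => Nat.lt_succ_of_le (le_of_le_of_eq
      (Finset.single_le_sum (f := fun i => (f.1 i).1)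
        (fun i _ => Nat.zero_le _) (Finset.mem_univ i)) f.2)
  apply Finite.of_injective (fun f => fun i =>
    (⟨⟨(f.1 i).1, key f i⟩, (f.1 i).2⟩ : Σ n : Fin (t+1), Nat.Partition n))
  intro f g hfg
  ext1; funext i
  have h1 := congrFun hfg i
  obtain ⟨h2, h3⟩ := Sigma.ext_iff.mp h1
  exact Sigma.ext (congrArg Fin.val h2) h3

instance finiteG (x w : ℕ) : Finite {g : Fin x → ℕ // ∑ j, g j = w} := by
  have key : ∀ (g : {g : Fin x → ℕ // ∑ j, g j = w}) (j : Fin x), g.1 j < w + 1 :=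
    fun g j => Nat.lt_succ_of_le (le_of_le_of_eq
      (Finset.single_le_sum (f := fun j => g.1 j)
        (fun j _ => Nat.zero_le _) (Finset.mem_univ j)) g.2)
  apply Finite.of_injective (fun g => fun j => (⟨g.1 j, key g j⟩ : Fin (w+1)))
  intro f g hfg
  ext1; funext j
  exact congrArg Fin.val (congrFun hfg j)

lemma card_finsetSum {α ι : Type*} (s : Finset ι) (f : ι → Multiset α) :
    Multiset.card (∑ i ∈ s, f i) = ∑ i ∈ s, Multiset.card (f i) := by
  classical
  induction s using Finset.induction with
  | empty => simp
  | insert _ _ hns ih => simp [Finset.sum_insert hns, ih]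

/-- stars and bars bound -/
lemma cardG_le (x w : ℕ) :
    Nat.card {g : Fin x → ℕ // ∑ j, g j = w} ≤ (x + w - 1).choose w := by
  have hinj : Function.Injective (fun g : {g : Fin x → ℕ // ∑ j, g j = w} =>
      (⟨∑ j, g.1 j • ({j} : Multiset (Fin x)), by
        simp [card_finsetSum, g.2]⟩ : Sym (Fin x) w)) := by
    intro g g' hgg
    have hval : (∑ j, g.1 j • ({j} : Multiset (Fin x)))
        = ∑ j, g'.1 j • ({j} : Multiset (Fin x)) := congrArg Subtype.val hgg
    ext1; funext j
    have := congrArg (Multiset.count j) hval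
    simpa [Multiset.count_sum', Multiset.count_nsmul, Multiset.count_singleton] using this
  calc Nat.card {g : Fin x → ℕ // ∑ j, g j = w}
      ≤ Nat.card (Sym (Fin x) w) := Nat.card_le_card_of_injective _ hinj
    _ = (x + w - 1).choose w := by
        rw [Nat.card_eq_fintype_card, Sym.card_sym_eq_choose, Fintype.card_fin]

/-- The number of `s`-multipartitions of `t`: tuples of `s` partitions whose sizes sum to `t`. -/
noncomputable def multipartitions (s t : ℕ) : ℕ :=
  Nat.card {f : Fin s → Σ n : ℕ, Nat.Partition n // ∑ i, (f i).1 = t}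

theorem multipartitions_mul_le (c x w : ℕ) (hc : 3 ≤ c) (hx : 1 ≤ x)
    (h : ∀ i ≤ w, multipartitions c i ≤ c ^ i) :
    multipartitions (c * x) w ≤ (x + w - 1).choose w * c ^ w := by
  classical
  set G := {g : Fin x → ℕ // ∑ j, g j = w} with hG
  set T := Σ g : G, ∀ j : Fin x,
      {f : Fin c → Σ n : ℕ, Nat.Partition n // ∑ i, (f i).1 = g.1 j} with hT
  have e : Fin c × Fin x ≃ Fin (c * x) := finProdFinEquiv
  -- Step 1: injection into T
  have step1 : multipartitions (c * x) w ≤ Nat.card T := by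
    have hsum : ∀ f : {f : Fin (c*x) → Σ n : ℕ, Nat.Partition n // ∑ i, (f i).1 = w},
        ∑ j : Fin x, ∑ i : Fin c, (f.1 (e (i, j))).1 = w := by
      intro f
      have h0 := Equiv.sum_comp e (fun k => (f.1 k).1)
      rw [Fintype.sum_prod_type] at h0
      rw [Finset.sum_comm, h0]
      exact f.2
    set Φ : {f : Fin (c*x) → Σ n : ℕ, Nat.Partition n // ∑ i, (f i).1 = w} → T :=
      fun f => ⟨⟨fun j => ∑ i : Fin c, (f.1 (e (i, j))).1, hsum f⟩,
        fun j => ⟨fun i => f.1 (e (i, j)), rfl⟩⟩ with hΦ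
    have hinj : Function.Injective Φ := by
      intro f f' hff
      have : ∀ k, f.1 k = f'.1 k := by
        intro k
        have h2 : (fun (t : T) => ((t.2 (e.symm k).2).1 (e.symm k).1)) (Φ f)
            = (fun (t : T) => ((t.2 (e.symm k).2).1 (e.symm k).1)) (Φ f') := by rw [hff]
        have h3 : f.1 (e ((e.symm k).1, (e.symm k).2)) = f'.1 (e ((e.symm k).1, (e.symm k).2)) := h2
        simpa [hΦ, Prod.mk.eta, Equiv.apply_symm_apply] using h3
      exact Subtype.ext (funext this)
    exact Nat.card_le_card_of_injective Φ hinj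
  -- Step 2: compute Nat.card T
  haveI : Fintype G := Fintype.ofFinite G
  haveI : ∀ g : G, Fintype (∀ j : Fin x,
      {f : Fin c → Σ n : ℕ, Nat.Partition n // ∑ i, (f i).1 = g.1 j}) :=
    fun g => Fintype.ofFinite _
  have step2 : Nat.card T = ∑ g : G, ∏ j : Fin x, multipartitions c (g.1 j) := by
    rw [Nat.card_eq_fintype_card, Fintype.card_sigma]
    refine Finset.sum_congr rfl fun g _ => ?_
    rw [← Nat.card_eq_fintype_card, Nat.card_pi]
    rfl
  have step3 : ∀ g : G, ∏ j : Fin x, multipartitions c (g.1 j) ≤ c ^ w := by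
    intro g
    have hle : ∀ j, g.1 j ≤ w := fun j => le_of_le_of_eq
      (Finset.single_le_sum (f := fun j => g.1 j)
        (fun j _ => Nat.zero_le _) (Finset.mem_univ j)) g.2
    calc ∏ j : Fin x, multipartitions c (g.1 j)
        ≤ ∏ j : Fin x, c ^ (g.1 j) :=
          Finset.prod_le_prod (fun _ _ => Nat.zero_le _)
            (fun j _ => h (g.1 j) (hle j))
      _ = c ^ (∑ j, g.1 j) := by rw [← Finset.prod_pow_eq_pow_sum]
      _ = c ^ w := by rw [g.2]
  calc multipartitions (c * x) w ≤ Nat.card T := step1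
    _ = ∑ g : G, ∏ j : Fin x, multipartitions c (g.1 j) := step2
    _ ≤ ∑ _g : G, c ^ w := Finset.sum_le_sum fun g _ => step3 g
    _ = Nat.card G * c ^ w := by
        rw [Finset.sum_const, Finset.card_univ, Nat.card_eq_fintype_card, smul_eq_mul]
    _ ≤ (x + w - 1).choose w * c ^ w :=
        Nat.mul_le_mul_right _ (cardG_le x w)
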